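/- arXiv:1910.06594 — 4 statements merged into one kernel-verified Lean document; each statement's English description precedes it below -/
import Mathlib

section
/- Let s > 0, D > 0, I_e > 0, M ≥ 0 and N be real numbers. Then the function h defined on (0, ∞) by h(T) = −(1/(2T))·(s·D·I_e·(T² − N²) + (2·s·D·T + s·D·(T² − N²)·I_e)·I_e·(M − T)) is strictly convex on (0, ∞). -/
theorem neg_interest_strictConvex (s D Ie M N : ℝ)
    (hs : 0 < s) (hD : 0 < D) (hIe : 0 < Ie) (hM : 0 ≤ M)
    (h : ℝ → ℝ)
    (hh : ∀ T : ℝ, h T = -(1 / (2 * T)) * (s * D * Ie * (T ^ 2 - N ^ 2)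
        + (2 * s * D * T + s * D * (T ^ 2 - N ^ 2) * Ie) * Ie * (M - T))) :
    StrictConvexOn ℝ (Set.Ioi (0 : ℝ)) h := by
  set A := s * D * Ie ^ 2 / 2 with hA
  set B := s * D * Ie * (1 - Ie * M) / 2 with hB
  set C := -(s * D * Ie * (2 * M + Ie * N ^ 2) / 2) with hC
  set K := s * D * Ie * N ^ 2 * (1 + Ie * M) / 2 with hK
  have hApos : 0 < A := by rw [hA]; positivity
  have hKnn : 0 ≤ K := by rw [hK]; positivity
  set g : ℝ → ℝ := fun T => A * T ^ 2 + B * T + C + K * T⁻¹ with hg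
  have heq : ∀ T ∈ Set.Ioi (0 : ℝ), h T = g T := by
    intro T hT
    have hT0 : T ≠ 0 := ne_of_gt hT
    rw [hh, hg]
    simp only [hA, hB, hC, hK]
    field_simp
    ring
  -- derivative of g
  have hgd : ∀ x : ℝ, x ≠ 0 → HasDerivAt g (2 * A * x + B - K / x ^ 2) x := by
    intro x hx
    have h1 : HasDerivAt (fun T : ℝ => A * T ^ 2 + B * T + C + K * T⁻¹)
        (A * (2 * x ^ 1) + B * 1 + K * (-(x ^ 2)⁻¹)) x := by
      exact ((((hasDerivAt_pow 2 x).const_mul A).add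
        ((hasDerivAt_id x).const_mul B)).add_const C).add
        ((hasDerivAt_inv hx).const_mul K)
    convert h1 using 1
    field_simp
    ring
  set g1 : ℝ → ℝ := fun x => 2 * A * x + B - K / x ^ 2 with hg1
  have hgcont : ContinuousOn g (Set.Ioi 0) := by
    apply ContinuousOn.add
    · exact (Continuous.continuousOn (by continuity))
    · exact continuousOn_const.mul (continuousOn_inv₀.mono (fun x hx => ne_of_gt hx))
  have hgconv : StrictConvexOn ℝ (Set.Ioi 0) g := by
    apply strictConvexOn_of_deriv2_pos (convex_Ioi 0) hgcont
    intro x hx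
    rw [interior_Ioi] at hx
    have hx0 : (0 : ℝ) < x := hx
    have hEv : deriv g =ᶠ[nhds x] g1 := by
      filter_upwards [isOpen_Ioi.mem_nhds hx] with y hy
      exact (hgd y (ne_of_gt hy)).deriv
    have hd2 : HasDerivAt g1 (2 * A + 2 * K / x ^ 3) x := by
      have h2 := (((hasDerivAt_id x).const_mul (2 * A)).add_const B).sub
          (((hasDerivAt_pow 2 x).inv (pow_ne_zero 2 (ne_of_gt hx0))).const_mul K)
      have hfeq : g1 = fun y : ℝ => 2 * A * y + B - K * (y ^ 2)⁻¹ := by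
        funext y; rw [hg1]; ring
      rw [hfeq]
      convert h2 using 1
      · rfl
      · rfl
      · rfl
      push_cast
      field_simp
      ring
    simp only [Function.iterate_succ_apply', Function.iterate_zero_apply]
    rw [hEv.deriv_eq, hd2.deriv]
    positivity
  refine ⟨convex_Ioi 0, ?_⟩
  intro x hx y hy hxy a b ha hb hab
  rw [heq x hx, heq y hy, heq _ ((convex_Ioi 0) hx hy ha.le hb.le hab)]
  exact hgconv.2 hx hy hxy ha hb hab
end

section
/- Let A > 0, D > 0, θ > 0, c ≥ 0, k > 0, h be real numbers with k ≥ h and k + cθ > 0, let T_a ≥ 0, and let W = (D/θ)·(exp(θ·T_a) − 1). Then the function g defined on (0, ∞) by g(T) = A/T + (D(k + cθ)/(θ²T))·(exp(θT) − θT − 1) − ((k − h)/(θ²T))·(D·(exp(θ·T_a) − θ·T_a − 1) + θ²·W·(T − T_a)) is strictly convex on (0, ∞). -/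
set_option maxHeartbeats 1000000 in
theorem cost_part_strictConvex (A D θ c k h Ta W : ℝ)
    (hA : 0 < A) (hD : 0 < D) (hθ : 0 < θ) (hc : 0 ≤ c) (hk : 0 < k)
    (hkh : h ≤ k) (hkcθ : 0 < k + c * θ) (hTa : 0 ≤ Ta)
    (hW : W = (D / θ) * (Real.exp (θ * Ta) - 1))
    (g : ℝ → ℝ)
    (hg : ∀ T : ℝ, g T = A / T
        + (D * (k + c * θ) / (θ ^ 2 * T)) * (Real.exp (θ * T) - θ * T - 1)
        - ((k - h) / (θ ^ 2 * T))
          * (D * (Real.exp (θ * Ta) - θ * Ta - 1) + θ ^ 2 * W * (T - Ta))) :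
    StrictConvexOn ℝ (Set.Ioi (0 : ℝ)) g := by
  have hθ0 : θ ≠ 0 := ne_of_gt hθ
  have hθ2 : (0:ℝ) < θ ^ 2 := by positivity
  set Cc : ℝ := D * (k + c * θ) / θ ^ 2 with hCc
  set R : ℝ := (k - h) / θ ^ 2 with hR
  set E : ℝ := D * (Real.exp (θ * Ta) - θ * Ta - 1) with hE
  set P : ℝ := A - Cc - R * E + R * θ ^ 2 * W * Ta with hP
  set K : ℝ := -(Cc * θ) - R * θ ^ 2 * W with hK
  have hCpos : 0 < Cc := div_pos (mul_pos hD hkcθ) hθ2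
  have hRnn : 0 ≤ R := div_nonneg (by linarith) hθ2.le
  -- key bound : A ≤ P + Cc
  have hB : A ≤ P + Cc := by
    have h1 : (1 - θ * Ta) * Real.exp (θ * Ta) ≤ 1 := by
      have h2 := Real.add_one_le_exp (-(θ * Ta))
      have h3 : Real.exp (-(θ * Ta)) * Real.exp (θ * Ta) = 1 := by
        rw [← Real.exp_add]; simp
      nlinarith [Real.exp_pos (θ * Ta)]
    have hW2 : θ ^ 2 * W = θ * D * (Real.exp (θ * Ta) - 1) := by
      rw [hW]; field_simp
    have h4 : 0 ≤ (θ * Ta - 1) * Real.exp (θ * Ta) + 1 := by nlinarith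
    have hkey : E ≤ θ ^ 2 * W * Ta := by
      rw [hE, hW2]
      nlinarith [mul_nonneg hD.le h4, mul_nonneg hθ.le hTa]
    have : 0 ≤ R * (θ ^ 2 * W * Ta - E) := mul_nonneg hRnn (by linarith)
    rw [hP]; nlinarith
  -- the simplified function
  set G : ℝ → ℝ := fun T => (P + Cc * Real.exp (θ * T)) / T + K with hG
  have heq : ∀ x ∈ Set.Ioi (0:ℝ), g x = G x := by
    intro x hx
    have hx0 : x ≠ 0 := ne_of_gt hx
    rw [hg, hG]
    simp only [hP, hK, hCc, hR]
    field_simp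
    ring
  -- first derivative
  set G1 : ℝ → ℝ := fun x =>
      (Cc * θ * Real.exp (θ * x) * x - (P + Cc * Real.exp (θ * x)) * 1) / x ^ 2 with hG1
  have hnum : ∀ x : ℝ, HasDerivAt (fun T => P + Cc * Real.exp (θ * T))
      (Cc * θ * Real.exp (θ * x)) x := by
    intro x
    have h1 : HasDerivAt (fun T : ℝ => θ * T) θ x := by
      simpa using (hasDerivAt_id x).const_mul θ
    have h2 := (h1.exp.const_mul Cc).const_add P
    simpa [mul_comm, mul_assoc, mul_left_comm] using h2
  have hder : ∀ x ∈ Set.Ioi (0:ℝ), HasDerivAt G (G1 x) x := by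
    intro x hx
    have hx0 : x ≠ 0 := ne_of_gt hx
    exact ((hnum x).div (hasDerivAt_id x) hx0).add_const K
  -- second derivative
  set G2 : ℝ → ℝ := fun x =>
      ((Cc * θ * (Real.exp (θ * x) * θ) * x + Cc * θ * Real.exp (θ * x) * 1
          - Cc * θ * Real.exp (θ * x)) * x ^ 2
        - (Cc * θ * Real.exp (θ * x) * x - (P + Cc * Real.exp (θ * x)) * 1)
            * (2 * x ^ 1)) / (x ^ 2) ^ 2 with hG2
  have hder2 : ∀ x ∈ Set.Ioi (0:ℝ), HasDerivAt G1 (G2 x) x := by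
    intro x hx
    have hx0 : x ≠ 0 := ne_of_gt hx
    have hx2 : x ^ 2 ≠ 0 := pow_ne_zero 2 hx0
    have h1 : HasDerivAt (fun T : ℝ => θ * T) θ x := by
      simpa using (hasDerivAt_id x).const_mul θ
    have hnum1 : HasDerivAt (fun T => Cc * θ * Real.exp (θ * T))
        (Cc * θ * (Real.exp (θ * x) * θ)) x := h1.exp.const_mul (Cc * θ)
    have hnum2 : HasDerivAt (fun T => Cc * θ * Real.exp (θ * T) * T)
        (Cc * θ * (Real.exp (θ * x) * θ) * x + Cc * θ * Real.exp (θ * x) * 1) x :=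
      hnum1.mul (hasDerivAt_id x)
    have hnum3 : HasDerivAt
        (fun T => Cc * θ * Real.exp (θ * T) * T - (P + Cc * Real.exp (θ * T)) * 1)
        (Cc * θ * (Real.exp (θ * x) * θ) * x + Cc * θ * Real.exp (θ * x) * 1
          - Cc * θ * Real.exp (θ * x)) x := by
      exact (hnum2.sub ((hnum x).mul_const 1)).congr_deriv (by ring)
    have hpow : HasDerivAt (fun T : ℝ => T ^ 2) (2 * x ^ 1) x := by
      simpa using hasDerivAt_pow 2 x
    exact hnum3.div hpow hx2
  have hcont : ContinuousOn G (Set.Ioi (0:ℝ)) := fun x hx =>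
    (hder x hx).continuousAt.continuousWithinAt
  have key : StrictConvexOn ℝ (Set.Ioi (0:ℝ)) G := by
    apply strictConvexOn_of_deriv2_pos (convex_Ioi 0) hcont
    intro x hx
    rw [interior_Ioi] at hx
    have hx0 : (0:ℝ) < x := hx
    have hd1 : deriv G =ᶠ[nhds x] G1 :=
      Filter.eventuallyEq_of_mem (Ioi_mem_nhds hx0) fun y hy => (hder y hy).deriv
    have h2 : deriv^[2] G x = G2 x := by
      show deriv (deriv G) x = G2 x
      rw [hd1.deriv_eq, (hder2 x hx0).deriv]
    rw [h2, hG2]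
    have ht : 0 < θ * x := mul_pos hθ hx0
    have hexp := Real.quadratic_le_exp_of_nonneg ht.le
    have hq : (0:ℝ) ≤ (θ * x) ^ 2 - 2 * (θ * x) + 2 := by nlinarith [sq_nonneg (θ * x - 1)]
    have hprod : 0 ≤ (Real.exp (θ * x) - (1 + θ * x + (θ * x) ^ 2 / 2))
        * ((θ * x) ^ 2 - 2 * (θ * x) + 2) :=
      mul_nonneg (by linarith) hq
    have hinner : 0 < Cc * ((θ * x) ^ 2 * Real.exp (θ * x) - 2 * (θ * x) * Real.exp (θ * x)
          + 2 * Real.exp (θ * x) - 2) + 2 * (P + Cc) := by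
      nlinarith [mul_nonneg hCpos.le hprod, mul_nonneg hCpos.le (pow_nonneg ht.le 4)]
    have hN : 0 < (Cc * θ * (Real.exp (θ * x) * θ) * x + Cc * θ * Real.exp (θ * x) * 1
          - Cc * θ * Real.exp (θ * x)) * x ^ 2
        - (Cc * θ * Real.exp (θ * x) * x - (P + Cc * Real.exp (θ * x)) * 1)
            * (2 * x ^ 1) := by
      have hfac : (Cc * θ * (Real.exp (θ * x) * θ) * x + Cc * θ * Real.exp (θ * x) * 1
          - Cc * θ * Real.exp (θ * x)) * x ^ 2
        - (Cc * θ * Real.exp (θ * x) * x - (P + Cc * Real.exp (θ * x)) * 1)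
            * (2 * x ^ 1)
          = x * (Cc * ((θ * x) ^ 2 * Real.exp (θ * x) - 2 * (θ * x) * Real.exp (θ * x)
          + 2 * Real.exp (θ * x) - 2) + 2 * (P + Cc)) := by ring
      rw [hfac]
      exact mul_pos hx0 hinner
    exact div_pos hN (by positivity)
  refine ⟨convex_Ioi 0, fun x hx y hy hxy a b ha hb hab => ?_⟩
  have hmem : a • x + b • y ∈ Set.Ioi (0:ℝ) := (convex_Ioi 0) hx hy ha.le hb.le hab
  rw [heq x hx, heq y hy, heq _ hmem]
  exact key.2 hx hy hxy ha hb hab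
end

section
/- Let A > 0, D > 0, θ > 0, c ≥ 0, k > 0, h, s > 0, I_e > 0, M ≥ 0, N be real numbers with k ≥ h and k + cθ > 0, let T_a ≥ 0, and let W = (D/θ)·(exp(θ·T_a) − 1). Define TC₃ on (0, ∞) by TC₃(T) = A/T + (D(k + cθ)/(θ²T))·(exp(θT) − θT − 1) − ((k − h)/(θ²T))·(D·(exp(θ·T_a) − θ·T_a − 1) + θ²·W·(T − T_a)) − (1/(2T))·(s·D·I_e·(T² − N²) + (2·s·D·T + s·D·(T² − N²)·I_e)·I_e·(M − T)). Then TC₃ is strictly convex on (0, ∞). -/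
open Set Real Filter

lemma cubic_le_exp {x : ℝ} (hx : 0 ≤ x) : 1 + x + x^2/2 + x^3/6 ≤ Real.exp x := by
  have h := Real.sum_le_exp_of_nonneg hx 4
  simp [Finset.sum_range_succ, Nat.factorial] at h
  linarith

lemma key_ineq {x : ℝ} (hx : 0 ≤ x) : 0 ≤ Real.exp x * (x^2 - 2*x + 2) - 2 := by
  have h := cubic_le_exp hx
  have hq : (0:ℝ) ≤ x^2 - 2*x + 2 := by nlinarith [sq_nonneg (x-1)]
  nlinarith [mul_le_mul_of_nonneg_right h hq, pow_nonneg hx 3, pow_nonneg hx 4, pow_nonneg hx 5]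

lemma ineq2 {x : ℝ} (hx : 0 ≤ x) : 0 ≤ (x - 1) * Real.exp x + 1 := by
  have h1 := Real.add_one_le_exp (-x)
  have h2 : Real.exp (-x) * Real.exp x = 1 := by
    rw [← Real.exp_add]; simp
  nlinarith [Real.exp_pos x, mul_le_mul_of_nonneg_right h1 (Real.exp_pos x).le]

lemma strictF (C1 C2 C3 C4 α θ : ℝ) (hC1 : 0 < C1) (hC2 : 0 < C2) (hα : 0 ≤ α)
    (hθ : 0 < θ) :
    StrictConvexOn ℝ (Set.Ioi (0:ℝ))
      (fun x => (C1 + α*(Real.exp (θ*x) - θ*x - 1)) * x⁻¹ + C2*x^2 + C3*x + C4) := by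
  set f : ℝ → ℝ := fun x => (C1 + α*(Real.exp (θ*x) - θ*x - 1)) * x⁻¹ + C2*x^2 + C3*x + C4 with hf
  set g : ℝ → ℝ := fun x => α*(Real.exp (θ*x)*θ - θ) * x⁻¹
      - (C1 + α*(Real.exp (θ*x) - θ*x - 1)) * (x^2)⁻¹ + 2*C2*x + C3 with hg
  have hu : ∀ x : ℝ, HasDerivAt (fun y => C1 + α*(Real.exp (θ*y) - θ*y - 1))
      (α*(Real.exp (θ*x)*θ - θ)) x := by
    intro x
    have h1 : HasDerivAt (fun y : ℝ => θ*y) θ x := by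
      simpa using (hasDerivAt_id x).const_mul θ
    exact ((((h1.exp).sub h1).sub_const 1).const_mul α).const_add C1
  have hgderiv : ∀ x : ℝ, x ≠ 0 → HasDerivAt f (g x) x := by
    intro x hx
    have h := (((hu x).mul (hasDerivAt_inv hx)).add
      ((hasDerivAt_pow 2 x).const_mul C2)).add
      (((hasDerivAt_id x).const_mul C3).add_const C4)
    convert h using 1
    · rfl
    · rfl
    · ext y; simp [hf]; ring
    · push_cast
      simp only [hg]
      field_simp
      ring
  have hE : ∀ x : ℝ, x ≠ 0 → HasDerivAt g
      ((2*C1 + α*(Real.exp (θ*x)*((θ*x)^2 - 2*(θ*x) + 2) - 2))/x^3 + 2*C2) x := by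
    intro x hx
    have h1 : HasDerivAt (fun y : ℝ => θ*y) θ x := by
      simpa using (hasDerivAt_id x).const_mul θ
    have ha : HasDerivAt (fun y => α*(Real.exp (θ*y)*θ - θ))
        (α*(Real.exp (θ*x)*θ*θ)) x := by
      have := ((h1.exp.mul_const θ).sub_const θ).const_mul α
      simpa using this
    have hb : HasDerivAt (fun y : ℝ => (y^2)⁻¹) (-(↑2 * x ^ (2-1)) / (x^2)^2) x :=
      (hasDerivAt_pow 2 x).inv (pow_ne_zero 2 hx)
    have h := (((ha.mul (hasDerivAt_inv hx)).sub
      ((hu x).mul hb)).add ((hasDerivAt_id x).const_mul (2*C2))).add_const C3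
    refine h.congr_deriv ?_
    push_cast
    field_simp
    ring
  apply strictConvexOn_of_deriv2_pos (convex_Ioi 0)
  · apply ContinuousOn.add
    apply ContinuousOn.add
    apply ContinuousOn.add
    · exact (Continuous.continuousOn (by continuity)).mul
        (continuousOn_inv₀.mono (fun y hy => by
          simp only [mem_compl_iff, mem_singleton_iff]
          exact ne_of_gt (mem_Ioi.mp hy)))
    · exact Continuous.continuousOn (by continuity)
    · exact Continuous.continuousOn (by continuity)
    · exact continuousOn_const
  · intro x hx
    rw [interior_Ioi] at hx
    have hx0 : (0:ℝ) < x := hx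
    have hxne : x ≠ 0 := ne_of_gt hx0
    have hev : deriv f =ᶠ[nhds x] g := by
      filter_upwards [eventually_ne_nhds hxne] with y hy
      exact (hgderiv y hy).deriv
    have h2 : deriv (deriv f) x
        = (2*C1 + α*(Real.exp (θ*x)*((θ*x)^2 - 2*(θ*x) + 2) - 2))/x^3 + 2*C2 := by
      rw [hev.deriv_eq]
      exact (hE x hxne).deriv
    show 0 < deriv (deriv f) x
    rw [h2]
    have hk := key_ineq (x := θ*x) (by positivity)
    have hnum : 0 < 2*C1 + α*(Real.exp (θ*x)*((θ*x)^2 - 2*(θ*x) + 2) - 2) := by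
      nlinarith [mul_nonneg hα hk]
    have := div_pos hnum (by positivity : (0:ℝ) < x^3)
    linarith

theorem TC3_strictConvex (A D θ c k h s Ie M N Ta W : ℝ)
    (hA : 0 < A) (hD : 0 < D) (hθ : 0 < θ) (hc : 0 ≤ c) (hk : 0 < k)
    (hs : 0 < s) (hIe : 0 < Ie) (hM : 0 ≤ M)
    (hkh : h ≤ k) (hkcθ : 0 < k + c * θ) (hTa : 0 ≤ Ta)
    (hW : W = (D / θ) * (Real.exp (θ * Ta) - 1))
    (TC3 : ℝ → ℝ)
    (hTC3 : ∀ T : ℝ, TC3 T = A / T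
        + (D * (k + c * θ) / (θ ^ 2 * T)) * (Real.exp (θ * T) - θ * T - 1)
        - ((k - h) / (θ ^ 2 * T))
          * (D * (Real.exp (θ * Ta) - θ * Ta - 1) + θ ^ 2 * W * (T - Ta))
        - (1 / (2 * T)) * (s * D * Ie * (T ^ 2 - N ^ 2)
            + (2 * s * D * T + s * D * (T ^ 2 - N ^ 2) * Ie) * Ie * (M - T))) :
    StrictConvexOn ℝ (Set.Ioi (0 : ℝ)) TC3 := by
  set α := D * (k + c*θ) / θ^2 with hα
  set C1 := A + (k - h)/θ^2 * D * ((θ*Ta - 1)*Real.exp (θ*Ta) + 1)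
      + s*D*Ie*N^2*(1 + Ie*M)/2 with hC1
  set C2 := s*D*Ie*Ie/2 with hC2
  set C3 := s*D*Ie/2 - s*D*Ie*Ie*M/2 with hC3
  set C4 := -(k - h)*W - s*D*Ie*M - s*D*Ie*Ie*N^2/2 with hC4
  have hC1pos : 0 < C1 := by
    have h1 : 0 ≤ (θ*Ta - 1)*Real.exp (θ*Ta) + 1 := ineq2 (by positivity)
    have h2 : 0 ≤ (k - h)/θ^2 * D :=
      mul_nonneg (div_nonneg (by linarith) (by positivity)) hD.le
    have h3 : 0 ≤ s*D*Ie*N^2*(1 + Ie*M)/2 := by positivity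
    rw [hC1]
    nlinarith [mul_nonneg h2 h1]
  have hC2pos : 0 < C2 := by positivity
  have hαpos : 0 ≤ α := by positivity
  have hF := strictF C1 C2 C3 C4 α θ hC1pos hC2pos hαpos hθ
  have hEq : ∀ T ∈ Set.Ioi (0:ℝ), TC3 T
      = (C1 + α*(Real.exp (θ*T) - θ*T - 1)) * T⁻¹ + C2*T^2 + C3*T + C4 := by
    intro T hT
    have hTne : T ≠ 0 := ne_of_gt hT
    have hθne : θ ≠ 0 := ne_of_gt hθ
    rw [hTC3, hC1, hC2, hC3, hC4, hα, hW]
    field_simp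
    ring
  refine ⟨hF.1, fun x hx y hy hxy a b ha hb hab => ?_⟩
  rw [hEq x hx, hEq y hy, hEq _ (hF.1 hx hy ha.le hb.le hab)]
  exact hF.2 hx hy hxy ha hb hab
end

section
/- Let A > 0, D > 0, θ > 0, c ≥ 0, k > 0, h, s > 0, I_e > 0, M ≥ 0, N be real numbers with k ≥ h and k + cθ > 0, let T_a ≥ 0, and let W = (D/θ)·(exp(θ·T_a) − 1). Define TC₃ on (0, ∞) by TC₃(T) = A/T + (D(k + cθ)/(θ²T))·(exp(θT) − θT − 1) − ((k − h)/(θ²T))·(D·(exp(θ·T_a) − θ·T_a − 1) + θ²·W·(T − T_a)) − (1/(2T))·(s·D·I_e·(T² − N²) + (2·s·D·T + s·D·(T² − N²)·I_e)·I_e·(M − T)). Then TC₃ attains a global minimum on (0, ∞) at a unique point; that is, there exists a unique T* > 0 such that TC₃(T*) ≤ TC₃(T) for all T > 0. -/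
open Real Set Filter Topology

private lemma gHasDeriv1 (P B θ Q R S x : ℝ) (hx : x ≠ 0) :
    HasDerivAt (fun T => P / T + B * Real.exp (θ * T) / T + Q + R * T + S * T ^ 2)
      (-P / x ^ 2 + B * (Real.exp (θ * x) * (θ * x - 1)) / x ^ 2 + R + 2 * S * x) x := by
  have h1 : HasDerivAt (fun T : ℝ => P / T) (-P / x ^ 2) x := by
    have := (hasDerivAt_const x P).div (hasDerivAt_id x) hx
    refine this.congr_deriv ?_
    simp only [id]; ring
  have he : HasDerivAt (fun T : ℝ => B * Real.exp (θ * T)) (B * (θ * Real.exp (θ * x))) x := by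
    have h0 : HasDerivAt (fun T : ℝ => θ * T) θ x := by
      simpa using (hasDerivAt_id x).const_mul θ
    have := (h0.exp).const_mul B
    refine this.congr_deriv ?_
    ring
  have h2 : HasDerivAt (fun T : ℝ => B * Real.exp (θ * T) / T)
      (B * (Real.exp (θ * x) * (θ * x - 1)) / x ^ 2) x := by
    have := he.div (hasDerivAt_id x) hx
    refine this.congr_deriv ?_
    simp only [id]; ring
  have h3 : HasDerivAt (fun T : ℝ => R * T) R x := by
    simpa using (hasDerivAt_id x).const_mul R
  have h4 : HasDerivAt (fun T : ℝ => S * T ^ 2) (2 * S * x) x := by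
    have := (hasDerivAt_pow 2 x).const_mul S
    refine this.congr_deriv ?_
    ring
  have := (((h1.add h2).add_const Q).add h3).add h4
  exact this

private lemma gHasDeriv2 (P B θ R S x : ℝ) (hx : x ≠ 0) :
    HasDerivAt (fun T => -P / T ^ 2 + B * (Real.exp (θ * T) * (θ * T - 1)) / T ^ 2 + R + 2 * S * T)
      ((2 * P + B * (Real.exp (θ * x) * (θ ^ 2 * x ^ 2 - 2 * θ * x + 2))) / x ^ 3 + 2 * S) x := by
  have hx2 : (x : ℝ) ^ 2 ≠ 0 := pow_ne_zero 2 hx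
  have h1 : HasDerivAt (fun T : ℝ => -P / T ^ 2) (2 * P / x ^ 3) x := by
    have := (hasDerivAt_const x (-P)).div (hasDerivAt_pow 2 x) hx2
    refine this.congr_deriv ?_
    field_simp
    ring
  have hu : HasDerivAt (fun T : ℝ => B * (Real.exp (θ * T) * (θ * T - 1)))
      (B * (θ ^ 2 * x * Real.exp (θ * x))) x := by
    have h0 : HasDerivAt (fun T : ℝ => θ * T) θ x := by
      simpa using (hasDerivAt_id x).const_mul θ
    have h0' : HasDerivAt (fun T : ℝ => θ * T - 1) θ x := h0.sub_const 1
    have := ((h0.exp).mul h0').const_mul B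
    refine this.congr_deriv ?_
    ring
  have h2 : HasDerivAt (fun T : ℝ => B * (Real.exp (θ * T) * (θ * T - 1)) / T ^ 2)
      (B * (Real.exp (θ * x) * (θ ^ 2 * x ^ 2 - 2 * θ * x + 2)) / x ^ 3 - 2 * B / x ^ 3 * 0) x := by
    have := hu.div (hasDerivAt_pow 2 x) hx2
    refine this.congr_deriv ?_
    field_simp
    ring
  have h3 : HasDerivAt (fun T : ℝ => 2 * S * T) (2 * S) x := by
    simpa using (hasDerivAt_id x).const_mul (2 * S)
  have := ((h1.add h2).add_const R).add h3
  refine this.congr_deriv ?_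
  field_simp
  ring

private lemma exp_quad_ge (y : ℝ) (hy : 0 ≤ y) :
    2 ≤ Real.exp y * (y ^ 2 - 2 * y + 2) := by
  have h := Real.quadratic_le_exp_of_nonneg hy
  have hq : (0:ℝ) ≤ y ^ 2 - 2 * y + 2 := by nlinarith [sq_nonneg (y - 1)]
  nlinarith [mul_le_mul_of_nonneg_right h hq, sq_nonneg (y ^ 2)]

private lemma key_ineq_s13 (y : ℝ) : Real.exp y - y - 1 ≤ y * (Real.exp y - 1) := by
  have h2 : -y + 1 ≤ Real.exp (-y) := Real.add_one_le_exp (-y)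
  have h1 : Real.exp y * Real.exp (-y) = 1 := by
    rw [← Real.exp_add]; simp
  nlinarith [Real.exp_pos y, mul_le_mul_of_nonneg_left h2 (Real.exp_pos y).le]

set_option maxHeartbeats 1000000 in
theorem TC3_unique_min (A D θ c k h s Ie M N Ta W : ℝ)
    (hA : 0 < A) (hD : 0 < D) (hθ : 0 < θ) (hc : 0 ≤ c) (hk : 0 < k)
    (hs : 0 < s) (hIe : 0 < Ie) (hM : 0 ≤ M)
    (hkh : h ≤ k) (hkcθ : 0 < k + c * θ) (hTa : 0 ≤ Ta)
    (hW : W = (D / θ) * (Real.exp (θ * Ta) - 1))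
    (TC3 : ℝ → ℝ)
    (hTC3 : ∀ T : ℝ, TC3 T = A / T
        + (D * (k + c * θ) / (θ ^ 2 * T)) * (Real.exp (θ * T) - θ * T - 1)
        - ((k - h) / (θ ^ 2 * T))
          * (D * (Real.exp (θ * Ta) - θ * Ta - 1) + θ ^ 2 * W * (T - Ta))
        - (1 / (2 * T)) * (s * D * Ie * (T ^ 2 - N ^ 2)
            + (2 * s * D * T + s * D * (T ^ 2 - N ^ 2) * Ie) * Ie * (M - T))) :
    ∃! Tstar : ℝ, 0 < Tstar ∧ ∀ T : ℝ, 0 < T → TC3 Tstar ≤ TC3 T := by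
  have hθ2 : (0:ℝ) < θ ^ 2 := by positivity
  obtain ⟨B, hBdef⟩ : ∃ x : ℝ, x = D * (k + c * θ) / θ ^ 2 := ⟨_, rfl⟩
  obtain ⟨CC, hCCdef⟩ : ∃ x : ℝ, x = D * (Real.exp (θ * Ta) - θ * Ta - 1) := ⟨_, rfl⟩
  obtain ⟨P, hPdef⟩ : ∃ x : ℝ, x = A + s * D * Ie * N ^ 2 / 2 + s * D * Ie ^ 2 * (M * N ^ 2) / 2
      - (k - h) * CC / θ ^ 2 + (k - h) * W * Ta - B := ⟨_, rfl⟩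
  obtain ⟨Q, hQdef⟩ : ∃ x : ℝ, x = -B * θ - (k - h) * W - s * D * Ie * M - s * D * Ie ^ 2 * N ^ 2 / 2 := ⟨_, rfl⟩
  obtain ⟨R, hRdef⟩ : ∃ x : ℝ, x = s * D * Ie / 2 - s * D * Ie ^ 2 * M / 2 := ⟨_, rfl⟩
  obtain ⟨S, hSdef⟩ : ∃ x : ℝ, x = s * D * Ie ^ 2 / 2 := ⟨_, rfl⟩
  obtain ⟨g, hgdef⟩ : ∃ x : ℝ → ℝ, x = fun T => P / T + B * Real.exp (θ * T) / T + Q + R * T + S * T ^ 2 := ⟨_, rfl⟩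
  have hB : 0 < B := hBdef ▸ div_pos (mul_pos hD hkcθ) hθ2
  have hS : 0 < S := by rw [hSdef]; positivity
  -- TC3 agrees with g on positives
  have heq : ∀ T : ℝ, T ≠ 0 → TC3 T = g T := by
    intro T hT
    rw [hTC3 T, hgdef, hPdef, hQdef, hRdef, hSdef, hBdef, hCCdef]
    field_simp
    ring
  -- P + B > 0
  have hPB : 0 < P + B := by
    have hkey := key_ineq_s13 (θ * Ta)
    have h1 : 0 ≤ W * Ta - CC / θ ^ 2 := by
      have e1 : W * Ta - CC / θ ^ 2
          = (D / θ ^ 2) * (θ * Ta * (Real.exp (θ * Ta) - 1)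
              - (Real.exp (θ * Ta) - θ * Ta - 1)) := by
        rw [hW, hCCdef]; field_simp
      rw [e1]
      apply mul_nonneg (by positivity)
      linarith
    have e2 : P + B = A + s * D * Ie * N ^ 2 / 2 + s * D * Ie ^ 2 * (M * N ^ 2) / 2
        + (k - h) * (W * Ta - CC / θ ^ 2) := by rw [hPdef]; ring
    rw [e2]
    have h2 : 0 ≤ (k - h) * (W * Ta - CC / θ ^ 2) := mul_nonneg (by linarith) h1
    have t1 : 0 ≤ s * D * Ie * N ^ 2 / 2 :=
      div_nonneg (mul_nonneg (by positivity) (sq_nonneg N)) (by norm_num)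
    have t2 : 0 ≤ s * D * Ie ^ 2 * (M * N ^ 2) / 2 :=
      div_nonneg (mul_nonneg (by positivity) (mul_nonneg hM (sq_nonneg N))) (by norm_num)
    linarith
  -- continuity of g on Ioi 0
  have hgc : ContinuousOn g (Ioi 0) := by
    have hne : ∀ x ∈ Ioi (0:ℝ), x ≠ 0 := fun x hx => ne_of_gt hx
    rw [hgdef]
    apply ContinuousOn.add
    apply ContinuousOn.add
    apply ContinuousOn.add
    apply ContinuousOn.add
    · exact continuousOn_const.div continuousOn_id hne
    · exact ((continuous_const.mul (Real.continuous_exp.comp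
        (continuous_const.mul continuous_id))).continuousOn).div continuousOn_id hne
    · exact continuousOn_const
    · exact (continuous_const.mul continuous_id).continuousOn
    · exact (continuous_const.mul (continuous_pow 2)).continuousOn
  -- strict convexity
  have hconv : StrictConvexOn ℝ (Ioi 0) g := by
    apply strictConvexOn_of_deriv2_pos (convex_Ioi 0) hgc
    intro x hx
    rw [interior_Ioi] at hx
    have hx0 : (x:ℝ) ≠ 0 := ne_of_gt hx
    have hg1 : ∀ y : ℝ, y ≠ 0 → deriv g y
        = -P / y ^ 2 + B * (Real.exp (θ * y) * (θ * y - 1)) / y ^ 2 + R + 2 * S * y := by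
      intro y hy
      rw [hgdef]
      exact (gHasDeriv1 P B θ Q R S y hy).deriv
    have hev : deriv g =ᶠ[𝓝 x] fun y =>
        -P / y ^ 2 + B * (Real.exp (θ * y) * (θ * y - 1)) / y ^ 2 + R + 2 * S * y := by
      filter_upwards [eventually_ne_nhds hx0] with y hy using hg1 y hy
    have hd2 : deriv^[2] g x
        = (2 * P + B * (Real.exp (θ * x) * (θ ^ 2 * x ^ 2 - 2 * θ * x + 2))) / x ^ 3 + 2 * S := by
      show deriv (deriv g) x = _
      rw [hev.deriv_eq, (gHasDeriv2 P B θ R S x hx0).deriv]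
    rw [hd2]
    have hq := exp_quad_ge (θ * x) (mul_nonneg hθ.le hx.le)
    have hnum : 0 < 2 * P + B * (Real.exp (θ * x) * (θ ^ 2 * x ^ 2 - 2 * θ * x + 2)) := by
      have : Real.exp (θ * x) * ((θ * x) ^ 2 - 2 * (θ * x) + 2)
          = Real.exp (θ * x) * (θ ^ 2 * x ^ 2 - 2 * θ * x + 2) := by ring
      rw [this] at hq
      have := mul_le_mul_of_nonneg_left hq hB.le
      linarith
    exact add_pos (div_pos hnum (pow_pos hx 3)) (by linarith)
  -- lower bound for small T
  have hlow : ∀ T : ℝ, 0 < T → T ≤ 1 → (P + B) / T - |Q| - |R| ≤ g T := by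
    intro T h0 h1
    have hexp : 1 ≤ Real.exp (θ * T) := Real.one_le_exp (mul_nonneg hθ.le h0.le)
    have e1 : B / T ≤ B * Real.exp (θ * T) / T :=
      (div_le_div_iff_of_pos_right h0).mpr (by nlinarith)
    have e2 : (P + B) / T = P / T + B / T := add_div P B T
    have e3 : -|R| ≤ R * T := by nlinarith [neg_abs_le R, abs_nonneg R]
    have e4 : (0:ℝ) ≤ S * T ^ 2 := mul_nonneg hS.le (sq_nonneg T)
    have e5 : -|Q| ≤ Q := neg_abs_le Q
    rw [hgdef]
    simp only
    rw [e2]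
    linarith
  -- lower bound for large T
  have hhigh : ∀ T : ℝ, 1 ≤ T → -|P| + Q + R * T + S * T ^ 2 ≤ g T := by
    intro T h1
    have h0 : (0:ℝ) < T := lt_of_lt_of_le one_pos h1
    have e1 : -|P| ≤ P / T := by
      have : -|P| / T ≤ P / T := (div_le_div_iff_of_pos_right h0).mpr (neg_abs_le P)
      have : -|P| ≤ -|P| / T := by
        rw [neg_div]
        have := div_le_self (abs_nonneg P) h1
        linarith
      linarith [(div_le_div_iff_of_pos_right h0).mpr (neg_abs_le P)]
    have e2 : (0:ℝ) < B * Real.exp (θ * T) / T :=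
      div_pos (mul_pos hB (Real.exp_pos _)) h0
    rw [hgdef]
    simp only
    linarith
  obtain ⟨m, hmdef⟩ : ∃ x : ℝ, x = g 1 := ⟨_, rfl⟩
  obtain ⟨K, hKdef⟩ : ∃ x : ℝ, x = |m| + |Q| + |R| + 1 := ⟨_, rfl⟩
  have hK : 0 < K := by rw [hKdef]; positivity
  obtain ⟨a, hadef⟩ : ∃ x : ℝ, x = min 1 ((P + B) / K) := ⟨_, rfl⟩
  have ha0 : 0 < a := by rw [hadef]; exact lt_min one_pos (div_pos hPB hK)
  have ha1 : a ≤ 1 := by rw [hadef]; exact min_le_left _ _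
  obtain ⟨b, hbdef⟩ : ∃ x : ℝ, x = max 1 (max ((|R| + 1) / S) (|m| + |P| + |Q| + 1)) := ⟨_, rfl⟩
  have hb1 : 1 ≤ b := by rw [hbdef]; exact le_max_left _ _
  have hsmall : ∀ T : ℝ, 0 < T → T < a → m < g T := by
    intro T h0 hTa'
    have hT1 : T ≤ 1 := le_of_lt (lt_of_lt_of_le hTa' ha1)
    have hKT : K < (P + B) / T := by
      rw [lt_div_iff₀ h0]
      have h1 : T < (P + B) / K := lt_of_lt_of_le hTa' (by rw [hadef]; exact min_le_right _ _)
      calc K * T < K * ((P + B) / K) := by exact mul_lt_mul_of_pos_left h1 hK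
        _ = P + B := by field_simp
    have := hlow T h0 hT1
    have habs : m ≤ |m| := le_abs_self m
    rw [hKdef] at hKT
    linarith
  have hbig : ∀ T : ℝ, b < T → m < g T := by
    intro T hbT
    have h1 : (1:ℝ) ≤ T := le_of_lt (lt_of_le_of_lt hb1 hbT)
    have h0 : (0:ℝ) < T := lt_of_lt_of_le one_pos h1
    have hTRS : (|R| + 1) / S ≤ T := by
      refine le_of_lt (lt_of_le_of_lt ?_ hbT)
      rw [hbdef]; exact (le_max_left _ _).trans (le_max_right _ _)
    have hST : |R| + 1 ≤ S * T := by
      rw [div_le_iff₀ hS] at hTRS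
      linarith [hTRS]
    have hRT : T ≤ R * T + S * T ^ 2 := by
      have h3 : (|R| + 1) * T ≤ S * T * T := mul_le_mul_of_nonneg_right hST h0.le
      have h4 : -|R| * T ≤ R * T := mul_le_mul_of_nonneg_right (neg_abs_le R) h0.le
      nlinarith
    have hTb : |m| + |P| + |Q| + 1 < T := by
      refine lt_of_le_of_lt ?_ hbT
      rw [hbdef]; exact (le_max_right _ _).trans (le_max_right _ _)
    have := hhigh T h1
    have habs : m ≤ |m| := le_abs_self m
    have hQabs : -|Q| ≤ Q := neg_abs_le Q
    linarith
  -- minimum on the compact interval [a, b]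
  have hab : a ≤ b := le_trans ha1 hb1
  have hsub : Icc a b ⊆ Ioi 0 := fun x hx => lt_of_lt_of_le ha0 hx.1
  obtain ⟨xs, hxsmem, hxsmin⟩ :=
    isCompact_Icc.exists_isMinOn (nonempty_Icc.mpr hab) (hgc.mono hsub)
  have hxs0 : 0 < xs := lt_of_lt_of_le ha0 hxsmem.1
  have h1mem : (1:ℝ) ∈ Icc a b := ⟨ha1, hb1⟩
  have hxsmin' : ∀ T ∈ Icc a b, g xs ≤ g T := fun T hT => isMinOn_iff.mp hxsmin T hT
  have hxsm : g xs ≤ m := hmdef ▸ hxsmin' 1 h1mem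
  have hxsglobal : ∀ T : ℝ, 0 < T → g xs ≤ g T := by
    intro T hT
    by_cases hc1 : T ∈ Icc a b
    · exact hxsmin' T hc1
    · rw [mem_Icc, not_and_or, not_le, not_le] at hc1
      rcases hc1 with hlt | hgt
      · linarith [hsmall T hT hlt]
      · linarith [hbig T hgt]
  have hxsIsMin : IsMinOn g (Ioi 0) xs :=
    isMinOn_iff.mpr fun T hT => hxsglobal T (mem_Ioi.mp hT)
  refine ⟨xs, ⟨hxs0, fun T hT => by
    rw [heq xs (ne_of_gt hxs0), heq T (ne_of_gt hT)]; exact hxsglobal T hT⟩, ?_⟩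
  rintro y ⟨hy0, hymin⟩
  have hyIsMin : IsMinOn g (Ioi 0) y := by
    apply isMinOn_iff.mpr
    intro T hT
    have := hymin T (mem_Ioi.mp hT)
    rwa [heq y (ne_of_gt hy0), heq T (ne_of_gt (mem_Ioi.mp hT))] at this
  exact hconv.eq_of_isMinOn hyIsMin hxsIsMin (mem_Ioi.mpr hy0) (mem_Ioi.mpr hxs0)
end
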